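/- Suppose F : ℝ^d → ℝ is convex and differentiable with β-Lipschitz gradient, θ* minimizes F, and ‖φ - θ*‖ ≤ B₁. Let φ⁺ = φ - η G̃ for some G̃ with ‖G̃ - ∇F(φ)‖ ≤ √A₂ and 0 < ηβ < 1. Then F(φ⁺) - F(φ) ≤ (η - η²β)√(2βA₂(F(φ) - F(θ*))) + (η²β/2)A₂ - ((2η - η²β)/(2B₁²))(F(φ) - F(θ*))². -/

import Mathlib

open Real InnerProductSpace

variable {E : Type*} [NormedAddCommGroup E] [InnerProductSpace ℝ E] [CompleteSpace E]

lemma line_hasDerivAt {F : E → ℝ} (hdiff : Differentiable ℝ F) (x v : E) (t : ℝ) :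
    HasDerivAt (fun s : ℝ => F (s • v + x)) ⟪gradient F (t • v + x), v⟫_ℝ t := by
  have hc : HasDerivAt (fun s : ℝ => s • v + x) v t := by
    simpa using ((hasDerivAt_id t).smul_const v).add_const x
  have hF := (hdiff (t • v + x)).hasGradientAt
  have := (hasGradientAt_iff_hasFDerivAt.mp hF).comp_hasDerivAt t hc
  exact this

lemma grad_ineq_convex {F : E → ℝ} (hconv : ConvexOn ℝ Set.univ F)
    (hdiff : Differentiable ℝ F) (x y : E) :
    ⟪gradient F x, y - x⟫_ℝ ≤ F y - F x := by
  set h : ℝ → ℝ := fun s : ℝ => F (s • (y - x) + x) with hh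
  have hhconv : ConvexOn ℝ Set.univ h := by
    have := hconv.comp_affineMap (AffineMap.lineMap x y)
    have heq : h = F ∘ AffineMap.lineMap x y := by
      funext s; simp [hh, AffineMap.lineMap_apply]
    rw [heq]; simpa using this
  have hd := line_hasDerivAt hdiff x (y - x) 0
  have := hhconv.le_slope_of_hasDerivAt (Set.mem_univ (0:ℝ)) (Set.mem_univ (1:ℝ))
    one_pos (by simpa using hd)
  simpa [slope_def_field, hh] using this

lemma smooth_upper {F : E → ℝ} (hdiff : Differentiable ℝ F) {β : ℝ}
    (hlip : ∀ x y : E, ‖gradient F x - gradient F y‖ ≤ β * ‖x - y‖) (x y : E) :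
    F y ≤ F x + ⟪gradient F x, y - x⟫_ℝ + β / 2 * ‖y - x‖ ^ 2 := by
  set v := y - x with hv
  set g : ℝ → ℝ := fun t => F (t • v + x) - t * ⟪gradient F x, v⟫_ℝ - β * t ^ 2 / 2 * ‖v‖ ^ 2
    with hg
  have hderiv : ∀ t : ℝ, HasDerivAt g
      (⟪gradient F (t • v + x), v⟫_ℝ - ⟪gradient F x, v⟫_ℝ - β * t * ‖v‖ ^ 2) t := by
    intro t
    have h1 := line_hasDerivAt hdiff x v t
    have h2 : HasDerivAt (fun t : ℝ => t * ⟪gradient F x, v⟫_ℝ) ⟪gradient F x, v⟫_ℝ t := by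
      simpa using (hasDerivAt_id t).mul_const ⟪gradient F x, v⟫_ℝ
    have h3 : HasDerivAt (fun t : ℝ => β * t ^ 2 / 2 * ‖v‖ ^ 2) (β * t * ‖v‖ ^ 2) t := by
      have : HasDerivAt (fun t : ℝ => t ^ 2) (2 * t) t := by
        simpa using hasDerivAt_pow 2 t
      have := ((this.const_mul β).div_const 2).mul_const (‖v‖ ^ 2)
      exact this.congr_deriv (by ring)
    exact (h1.sub h2).sub h3
  have hanti : AntitoneOn g (Set.Icc 0 1) := by
    apply antitoneOn_of_deriv_nonpos (convex_Icc 0 1)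
    · exact fun t _ => ((hderiv t).continuousAt).continuousWithinAt
    · exact fun t _ => ((hderiv t).differentiableAt).differentiableWithinAt
    · intro t ht
      rw [interior_Icc] at ht
      rw [(hderiv t).deriv]
      have hcs : ⟪gradient F (t • v + x) - gradient F x, v⟫_ℝ
          ≤ ‖gradient F (t • v + x) - gradient F x‖ * ‖v‖ := real_inner_le_norm _ _
      have hl : ‖gradient F (t • v + x) - gradient F x‖ ≤ β * ‖t • v‖ := by
        simpa using hlip (t • v + x) x
      have hnv : ‖t • v‖ = t * ‖v‖ := by
        rw [norm_smul, Real.norm_eq_abs, abs_of_pos ht.1]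
      rw [hnv] at hl
      have hsub := inner_sub_left (𝕜 := ℝ) (gradient F (t • v + x)) (gradient F x) v
      nlinarith [mul_le_mul_of_nonneg_right hl (norm_nonneg v)]
  have h10 := hanti (Set.left_mem_Icc.mpr zero_le_one) (Set.right_mem_Icc.mpr zero_le_one)
    zero_le_one
  simp only [hg] at h10
  have : (1:ℝ) • v + x = y := by simp [hv]
  rw [this] at h10
  simp at h10
  have hgv : ⟪gradient F x, v⟫_ℝ = (fderiv ℝ F x) v := by simp
  nlinarith [h10, hgv]

set_option maxHeartbeats 1000000 in
theorem stmt_19 (d : ℕ) (η β A₂ B₁ : ℝ)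
    (hη : 0 < η) (hβ : 0 < β) (hηβ : η * β < 1) (hA₂ : 0 ≤ A₂) (hB₁ : 0 < B₁)
    (F : EuclideanSpace ℝ (Fin d) → ℝ)
    (hconv : ConvexOn ℝ Set.univ F)
    (hdiff : Differentiable ℝ F)
    (hlip : ∀ x y : EuclideanSpace ℝ (Fin d), ‖gradient F x - gradient F y‖ ≤ β * ‖x - y‖)
    (θstar : EuclideanSpace ℝ (Fin d)) (hmin : ∀ x, F θstar ≤ F x)
    (φ Gt : EuclideanSpace ℝ (Fin d))
    (hφB : ‖φ - θstar‖ ≤ B₁)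
    (hGt : ‖Gt - gradient F φ‖ ≤ Real.sqrt A₂) :
    F (φ - η • Gt) - F φ
      ≤ (η - η ^ 2 * β) * Real.sqrt (2 * β * A₂ * (F φ - F θstar))
        + (η ^ 2 * β / 2) * A₂
        - ((2 * η - η ^ 2 * β) / (2 * B₁ ^ 2)) * (F φ - F θstar) ^ 2 := by
  set g := gradient F φ with hgdef
  set e := Gt - g with hedef
  set Δ := F φ - F θstar with hΔdef
  have hΔ : 0 ≤ Δ := sub_nonneg.mpr (hmin φ)
  have hGte : Gt = g + e := by rw [hedef]; abel
  -- smoothness step at φ⁺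
  have hS := smooth_upper hdiff hlip φ (φ - η • Gt)
  have hy : (φ - η • Gt) - φ = -(η • Gt) := by abel
  rw [hy] at hS
  have hi0 : ⟪g, -(η • Gt)⟫_ℝ = -(η * ⟪g, Gt⟫_ℝ) := by
    rw [inner_neg_right, real_inner_smul_right]
  have hn0 : ‖-(η • Gt)‖ ^ 2 = η ^ 2 * ‖Gt‖ ^ 2 := by
    rw [norm_neg, norm_smul, Real.norm_eq_abs, abs_of_pos hη, mul_pow]
  rw [hi0, hn0] at hS
  have hi1 : ⟪g, Gt⟫_ℝ = ‖g‖ ^ 2 + ⟪g, e⟫_ℝ := by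
    rw [hGte, inner_add_right, real_inner_self_eq_norm_sq]
  have hi2 : ‖Gt‖ ^ 2 = ‖g‖ ^ 2 + 2 * ⟪g, e⟫_ℝ + ‖e‖ ^ 2 := by
    rw [hGte]; exact norm_add_sq_real g e
  rw [hi1, hi2] at hS
  have hsm : F (φ - η • Gt) - F φ
      ≤ -((2 * η - η ^ 2 * β) / 2) * ‖g‖ ^ 2 + (η - η ^ 2 * β) * (-⟪g, e⟫_ℝ)
        + (η ^ 2 * β / 2) * ‖e‖ ^ 2 := by nlinarith [hS]
  -- bound on ‖g‖²
  have hg2 : ‖g‖ ^ 2 ≤ 2 * β * Δ := by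
    have hS2 := smooth_upper hdiff hlip φ (φ - β⁻¹ • g)
    have hy2 : (φ - β⁻¹ • g) - φ = -(β⁻¹ • g) := by abel
    rw [hy2, inner_neg_right, real_inner_smul_right, real_inner_self_eq_norm_sq,
      norm_neg, norm_smul, Real.norm_eq_abs, abs_of_pos (inv_pos.mpr hβ), mul_pow] at hS2
    rw [← hgdef] at hS2
    have hm := hmin (φ - β⁻¹ • g)
    have heq : F φ + -(β⁻¹ * ‖g‖ ^ 2) + β / 2 * (β⁻¹ ^ 2 * ‖g‖ ^ 2)
        = F φ - ‖g‖ ^ 2 / (2 * β) := by field_simp; ring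
    rw [heq] at hS2
    have h9 : ‖g‖ ^ 2 / (2 * β) ≤ Δ := by rw [hΔdef]; linarith
    have := (div_le_iff₀ (by positivity : (0:ℝ) < 2 * β)).mp h9
    linarith
  -- lower bound on ‖g‖ from convexity
  have hgB : Δ ≤ ‖g‖ * B₁ := by
    have hc := grad_ineq_convex hconv hdiff φ θstar
    have : Δ ≤ ⟪g, φ - θstar⟫_ℝ := by
      have : θstar - φ = -(φ - θstar) := by abel
      rw [this, inner_neg_right] at hc
      linarith
    calc Δ ≤ ⟪g, φ - θstar⟫_ℝ := this
      _ ≤ ‖g‖ * ‖φ - θstar‖ := real_inner_le_norm g (φ - θstar)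
      _ ≤ ‖g‖ * B₁ := mul_le_mul_of_nonneg_left hφB (norm_nonneg g)
  have h6 : Δ ^ 2 ≤ ‖g‖ ^ 2 * B₁ ^ 2 := by
    have h := mul_le_mul hgB hgB hΔ (mul_nonneg (norm_nonneg g) hB₁.le)
    nlinarith [h]
  -- error bounds
  have h5 : ‖e‖ ^ 2 ≤ A₂ := by
    have := pow_le_pow_left₀ (norm_nonneg e) hGt 2
    rwa [Real.sq_sqrt hA₂] at this
  have h2 : -⟪g, e⟫_ℝ ≤ ‖g‖ * ‖e‖ := by
    have := abs_real_inner_le_norm g e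
    have := neg_abs_le ⟪g, e⟫_ℝ
    linarith
  have h3 : ‖g‖ * ‖e‖ ≤ ‖g‖ * Real.sqrt A₂ := mul_le_mul_of_nonneg_left hGt (norm_nonneg g)
  have h4 : ‖g‖ * Real.sqrt A₂ ≤ Real.sqrt (2 * β * A₂ * Δ) := by
    have hgs : ‖g‖ ≤ Real.sqrt (2 * β * Δ) :=
      (Real.le_sqrt (norm_nonneg g) (by positivity)).mpr hg2
    calc ‖g‖ * Real.sqrt A₂ ≤ Real.sqrt (2 * β * Δ) * Real.sqrt A₂ :=
          mul_le_mul_of_nonneg_right hgs (Real.sqrt_nonneg A₂)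
      _ = Real.sqrt (2 * β * Δ * A₂) := (Real.sqrt_mul (by positivity) A₂).symm
      _ = Real.sqrt (2 * β * A₂ * Δ) := by ring_nf
  have hc1 : 0 ≤ η - η ^ 2 * β := by nlinarith
  have t1 : (η - η ^ 2 * β) * (-⟪g, e⟫_ℝ)
      ≤ (η - η ^ 2 * β) * Real.sqrt (2 * β * A₂ * Δ) :=
    mul_le_mul_of_nonneg_left ((h2.trans h3).trans h4) hc1
  have t2 : (η ^ 2 * β / 2) * ‖e‖ ^ 2 ≤ (η ^ 2 * β / 2) * A₂ :=
    mul_le_mul_of_nonneg_left h5 (by positivity)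
  have hc2 : 0 ≤ 2 * η - η ^ 2 * β := by nlinarith
  have key : -((2 * η - η ^ 2 * β) / 2) * ‖g‖ ^ 2
      ≤ -((2 * η - η ^ 2 * β) / (2 * B₁ ^ 2)) * Δ ^ 2 := by
    have h7 : (2 * η - η ^ 2 * β) / (2 * B₁ ^ 2) * Δ ^ 2
        ≤ (2 * η - η ^ 2 * β) / (2 * B₁ ^ 2) * (‖g‖ ^ 2 * B₁ ^ 2) :=
      mul_le_mul_of_nonneg_left h6 (div_nonneg hc2 (by positivity))
    have h8 : (2 * η - η ^ 2 * β) / (2 * B₁ ^ 2) * (‖g‖ ^ 2 * B₁ ^ 2)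
        = (2 * η - η ^ 2 * β) / 2 * ‖g‖ ^ 2 := by
      field_simp
    linarith [h7, h8.le, h8.ge]
  linarith [hsm, t1, t2, key]
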